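/- Let W be a set of vertices of G₂ with |W| < ∏_{i=1}^{m−1} (p_i − 1). Then the graph G₂ − W obtained by deleting the vertices of W is connected, every vertex of G₂ − W is at distance at most 2 (in G₂ − W) from some vertex of X_{{m}} not in W, and the diameter of G₂ − W is at most 4. -/

import Mathlib

open Finset

abbrev NN (m : ℕ) (p : Fin m → ℕ) : ℕ := ∏ i, p i

abbrev Vtx (m : ℕ) (p : Fin m → ℕ) : Type :=
  {x : ZMod (NN m p) // x ≠ 0 ∧ ¬ IsUnit x}

/-- The induced subgraph `G₂` of the comaximal graph of `ℤ/nℤ` on nonzero nonunits. -/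
def G2 (m : ℕ) (p : Fin m → ℕ) : SimpleGraph (Vtx m p) where
  Adj x y := x ≠ y ∧ Ideal.span ({x.1, y.1} : Set (ZMod (NN m p))) = ⊤
  symm := by
    constructor
    rintro x y ⟨hxy, h⟩
    exact ⟨hxy.symm, by rwa [Set.pair_comm]⟩
  loopless := by constructor; rintro x ⟨h, -⟩; exact h rfl

/-- The zero-set of `x`: indices `i` where the image of `x` in `ℤ/p_iℤ` is zero. -/
def Z (m : ℕ) (p : Fin m → ℕ) (x : ZMod (NN m p)) : Finset (Fin m) :=
  Finset.univ.filter fun i =>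
    (ZMod.castHom (Finset.dvd_prod_of_mem p (Finset.mem_univ i)) (ZMod (p i))) x = 0

/-- The class `X_S` of vertices of `G₂` with zero-set `S`. -/
def XS (m : ℕ) (p : Fin m → ℕ) (S : Finset (Fin m)) : Set (Vtx m p) :=
  {x | Z m p x.1 = S}

/-- Diameter: the maximum over all pairs of vertices of the graph distance. -/
noncomputable def gdiam {V : Type*} (G : SimpleGraph V) : ℕ :=
  sSup {d | ∃ x y, G.dist x y = d}


section Helpers

lemma prod_dvd_aux {ι : Type*} (s : Finset ι) (f : ι → ℕ) (n : ℕ)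
    (hcop : ∀ i ∈ s, ∀ j ∈ s, i ≠ j → Nat.Coprime (f i) (f j))
    (hdvd : ∀ i ∈ s, f i ∣ n) : (∏ i ∈ s, f i) ∣ n := by
  classical
  induction s using Finset.induction_on with
  | empty => simpa using one_dvd n
  | @insert a s hx ih =>
    rw [Finset.prod_insert hx]
    refine Nat.Coprime.mul_dvd_of_dvd_of_dvd ?_ (hdvd a (by simp)) (ih ?_ ?_)
    · refine Nat.Coprime.prod_right fun j hj => hcop a (by simp) j (by simp [hj]) ?_
      rintro rfl; exact hx hj
    · intro i hi j hj hij; exact hcop i (by simp [hi]) j (by simp [hj]) hij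
    · intro i hi; exact hdvd i (by simp [hi])

variable {m : ℕ} {p : Fin m → ℕ}

/-- The componentwise reduction map. -/
def psi (m : ℕ) (p : Fin m → ℕ) : ZMod (NN m p) →+* Π i, ZMod (p i) :=
  Pi.ringHom fun i => ZMod.castHom (Finset.dvd_prod_of_mem p (Finset.mem_univ i)) (ZMod (p i))

lemma psi_inj (hp : ∀ i, (p i).Prime) (hinj : Function.Injective p) :
    Function.Injective (psi m p) := by
  haveI : NeZero (NN m p) := ⟨(Finset.prod_pos fun i _ => (hp i).pos).ne'⟩
  refine (injective_iff_map_eq_zero _).mpr fun x hx => ?_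
  have h1 : ∀ i, ((x.val : ℕ) : ZMod (p i)) = 0 := by
    intro i
    haveI : NeZero (p i) := ⟨(hp i).ne_zero⟩
    have := congrFun hx i
    simpa [psi, Pi.ringHom, ZMod.natCast_val] using this
  have h2 : ∀ i, p i ∣ x.val := by
    intro i
    haveI : NeZero (p i) := ⟨(hp i).ne_zero⟩
    exact (ZMod.natCast_eq_zero_iff _ _).mp (h1 i)
  have h3 : NN m p ∣ x.val := by
    refine prod_dvd_aux _ _ _ (fun i _ j _ hij => ?_) (fun i _ => h2 i)
    exact (Nat.coprime_primes (hp i) (hp j)).mpr fun e => hij (hinj e)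
  have h4 : x.val < NN m p := ZMod.val_lt x
  have h5 : x.val = 0 := by
    rcases Nat.eq_zero_or_pos x.val with h | h
    · exact h
    · exact absurd h4 (not_lt.mpr (Nat.le_of_dvd h h3))
  exact (ZMod.val_eq_zero x).mp h5

lemma psi_bij (hp : ∀ i, (p i).Prime) (hinj : Function.Injective p) :
    Function.Bijective (psi m p) := by
  haveI : NeZero (NN m p) := ⟨(Finset.prod_pos fun i _ => (hp i).pos).ne'⟩
  haveI : ∀ i, NeZero (p i) := fun i => ⟨(hp i).ne_zero⟩
  refine (Fintype.bijective_iff_injective_and_card _).mpr ⟨psi_inj hp hinj, ?_⟩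
  rw [ZMod.card, Fintype.card_pi]
  exact Finset.prod_congr rfl fun i _ => (ZMod.card (p i)).symm


variable {m : ℕ} {p : Fin m → ℕ}

lemma mem_Z (x : ZMod (NN m p)) (i : Fin m) : i ∈ Z m p x ↔ psi m p x i = 0 := by
  rw [Z, Finset.mem_filter]
  simp [psi, Pi.ringHom]

lemma eq_zero_iff (hp : ∀ i, (p i).Prime) (hinj : Function.Injective p)
    (x : ZMod (NN m p)) : x = 0 ↔ ∀ i, psi m p x i = 0 := by
  constructor
  · rintro rfl i; simp
  · intro h
    apply psi_inj hp hinj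
    ext i; simpa using h i

lemma isUnit_iff (hp : ∀ i, (p i).Prime) (hinj : Function.Injective p)
    (x : ZMod (NN m p)) : IsUnit x ↔ ∀ i, psi m p x i ≠ 0 := by
  haveI : ∀ i, Fact (p i).Prime := fun i => ⟨hp i⟩
  constructor
  · intro h i
    exact ((h.map (psi m p)).map (Pi.evalRingHom _ i)).ne_zero
  · intro h
    obtain ⟨y, hy⟩ := (psi_bij hp hinj).2 (fun i => (psi m p x i)⁻¹)
    refine IsUnit.of_mul_eq_one (a := x) y (psi_inj hp hinj ?_)
    ext i
    simp only [map_mul, map_one, hy, Pi.mul_apply, Pi.one_apply]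
    exact mul_inv_cancel₀ (h i)

lemma span_top_iff (hp : ∀ i, (p i).Prime) (hinj : Function.Injective p)
    (x y : ZMod (NN m p)) :
    Ideal.span ({x, y} : Set (ZMod (NN m p))) = ⊤ ↔
      ∀ i, psi m p x i ≠ 0 ∨ psi m p y i ≠ 0 := by
  haveI : ∀ i, Fact (p i).Prime := fun i => ⟨hp i⟩
  rw [Ideal.eq_top_iff_one, Ideal.mem_span_pair]
  constructor
  · rintro ⟨a, b, hab⟩ i
    by_contra h
    push_neg at h
    have := congrFun (congrArg (psi m p) hab) i
    simp [h.1, h.2] at this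
  · intro h
    classical
    obtain ⟨A, hA⟩ := (psi_bij hp hinj).2
      (fun i => if psi m p x i ≠ 0 then (psi m p x i)⁻¹ else 0)
    obtain ⟨B, hB⟩ := (psi_bij hp hinj).2
      (fun i => if psi m p x i ≠ 0 then 0 else (psi m p y i)⁻¹)
    refine ⟨A, B, psi_inj hp hinj ?_⟩
    ext i
    simp only [map_add, map_mul, map_one, hA, hB, Pi.add_apply, Pi.mul_apply, Pi.one_apply]
    by_cases hx : psi m p x i ≠ 0
    · simp [hx, inv_mul_cancel₀ hx]
    · have hy : psi m p y i ≠ 0 := (h i).resolve_left (by simpa using hx)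
      simp [hx, inv_mul_cancel₀ hy]


lemma exists_special (hp : ∀ i, (p i).Prime) (hinj : Function.Injective p)
    (hm : 2 ≤ m) (j : Fin m) (W : Set (Vtx m p))
    (hW : W.ncard < ∏ i ∈ Finset.univ.erase j, (p i - 1)) :
    ∃ u : Vtx m p, Z m p u.1 = {j} ∧ u ∉ W := by
  classical
  haveI : ∀ i, NeZero (p i) := fun i => ⟨(hp i).ne_zero⟩
  haveI : NeZero (NN m p) := ⟨(Finset.prod_pos fun i _ => (hp i).pos).ne'⟩
  haveI : Nontrivial (Fin m) :=
    ⟨⟨⟨0, by omega⟩, ⟨1, by omega⟩, by simp [Fin.ext_iff]⟩⟩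
  obtain ⟨i0, hi0⟩ := exists_ne j
  set T : Finset (Π i, ZMod (p i)) :=
    Fintype.piFinset fun i => if i = j then {0} else Finset.univ.filter (· ≠ 0) with hT
  have hTcard : T.card = ∏ i ∈ Finset.univ.erase j, (p i - 1) := by
    rw [hT, Fintype.card_piFinset]
    conv_lhs => rw [show (Finset.univ : Finset (Fin m)) = insert j (Finset.univ.erase j) from
        (Finset.insert_erase (Finset.mem_univ j)).symm]
    rw [Finset.prod_insert (Finset.notMem_erase j Finset.univ)]
    simp only [if_pos, Finset.card_singleton, one_mul]
    refine Finset.prod_congr rfl fun i hi => ?_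
    rw [if_neg (Finset.ne_of_mem_erase hi), Finset.filter_ne', Finset.card_erase_of_mem
      (Finset.mem_univ _), Finset.card_univ, ZMod.card]
  have hmemT : ∀ a ∈ T, a j = 0 ∧ ∀ i, i ≠ j → a i ≠ 0 := by
    intro a ha
    rw [hT, Fintype.mem_piFinset] at ha
    refine ⟨by simpa using ha j, fun i hi => ?_⟩
    have := ha i
    rw [if_neg hi, Finset.mem_filter] at this
    exact this.2
  set S : Set (Vtx m p) := {u | Z m p u.1 = {j}} with hS
  set einv : (Π i, ZMod (p i)) → ZMod (NN m p) :=
    Function.surjInv (psi_bij hp hinj).2 with heinv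
  have hkey : ∀ a, psi m p (einv a) = a := fun a =>
    Function.surjInv_eq (psi_bij hp hinj).2 a
  have hF : ∀ a : ↥T, (⟨einv a.1, ?_, ?_⟩ : Vtx m p) ∈ S := ?_
  rotate_left
  · -- nonzero
    intro h0
    have := (eq_zero_iff hp hinj _).mp h0 i0
    rw [hkey] at this
    exact (hmemT a.1 a.2).2 i0 hi0 this
  · -- nonunit
    intro hu
    have := (isUnit_iff hp hinj _).mp hu j
    rw [hkey] at this
    exact this (hmemT a.1 a.2).1
  · intro a
    have ha := hmemT a.1 a.2
    simp only [hS, Set.mem_setOf_eq]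
    ext i
    rw [mem_Z, Finset.mem_singleton, hkey]
    constructor
    · intro h; by_contra hij; exact ha.2 i hij h
    · rintro rfl; exact ha.1
  let F : ↥T → ↥S := fun a => ⟨_, hF a⟩
  have hFinj : Function.Injective F := by
    intro a b hab
    have : einv a.1 = einv b.1 := congrArg (fun u => u.1.1) hab
    have := congrArg (psi m p) this
    rw [hkey, hkey] at this
    exact Subtype.ext this
  haveI : Finite (Vtx m p) := Subtype.finite
  have hcards : T.card ≤ S.ncard := by
    rw [← Nat.card_coe_set_eq]
    calc T.card = Nat.card ↥T := by
          rw [Nat.card_eq_fintype_card, Fintype.card_coe]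
      _ ≤ Nat.card ↥S := Nat.card_le_card_of_injective F hFinj
  have hnot : ¬ S ⊆ W := by
    intro hsub
    have := Set.ncard_le_ncard hsub (Set.toFinite W)
    omega
  obtain ⟨u, hu, hw⟩ := Set.not_subset.mp hnot
  exact ⟨u, hu, hw⟩

lemma prod_erase_le (j jm : Fin m) (hj : p j ≤ p jm) :
    ∏ i ∈ Finset.univ.erase jm, (p i - 1) ≤ ∏ i ∈ Finset.univ.erase j, (p i - 1) := by
  classical
  by_cases h : j = jm
  · subst h; exact le_rfl
  · have hjm : jm ∈ Finset.univ.erase j := by simp [Ne.symm h]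
    have hjj : j ∈ Finset.univ.erase jm := by simp [h]
    rw [← Finset.mul_prod_erase _ _ hjm, ← Finset.mul_prod_erase _ _ hjj]
    have : (Finset.univ.erase j).erase jm = (Finset.univ.erase jm).erase j := by
      ext x; simp [and_comm]
    rw [this]
    exact Nat.mul_le_mul_right _ (Nat.sub_le_sub_right hj 1)


lemma Z_nonempty (hp : ∀ i, (p i).Prime) (hinj : Function.Injective p)
    (x : Vtx m p) : ∃ i, i ∈ Z m p x.1 := by
  have := x.2.2
  rw [isUnit_iff hp hinj] at this
  push_neg at this
  obtain ⟨i, hi⟩ := this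
  exact ⟨i, (mem_Z _ _).mpr hi⟩

lemma adj_of_disjoint (hp : ∀ i, (p i).Prime) (hinj : Function.Injective p)
    (x y : Vtx m p) (hd : ∀ i, i ∈ Z m p x.1 → i ∉ Z m p y.1) :
    (G2 m p).Adj x y := by
  obtain ⟨i0, hi0⟩ := Z_nonempty hp hinj x
  refine ⟨fun h => hd i0 hi0 (h ▸ hi0), ?_⟩
  rw [span_top_iff hp hinj]
  intro i
  by_contra h
  push_neg at h
  exact hd i ((mem_Z _ _).mpr h.1) ((mem_Z _ _).mpr h.2)


end Helpers

theorem stmt19 (m : ℕ) (hm : 3 ≤ m) (p : Fin m → ℕ) (hp : ∀ i, (p i).Prime)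
    (hmono : StrictMono p) (W : Set (Vtx m p))
    (hW : W.ncard < ∏ i ∈ Finset.univ.erase (⟨m - 1, by omega⟩ : Fin m), (p i - 1)) :
    ((G2 m p).induce Wᶜ).Connected ∧
    (∀ v : ↥(Wᶜ), ∃ u : ↥(Wᶜ), (u : Vtx m p) ∈ XS m p {(⟨m - 1, by omega⟩ : Fin m)} ∧
      ((G2 m p).induce Wᶜ).dist v u ≤ 2) ∧
    gdiam ((G2 m p).induce Wᶜ) ≤ 4 := by
  have hinj : Function.Injective p := hmono.injective
  have hm2 : 2 ≤ m := by omega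
  set jm : Fin m := ⟨m - 1, by omega⟩ with hjmdef
  have hex : ∀ j : Fin m, ∃ u : Vtx m p, Z m p u.1 = {j} ∧ u ∉ W := by
    intro j
    refine exists_special hp hinj hm2 j W (lt_of_lt_of_le hW ?_)
    refine prod_erase_le j jm (hmono.monotone ?_)
    have := j.isLt
    exact Fin.mk_le_mk.mpr (by omega) |>.trans_eq rfl
  obtain ⟨u, hZu, huW⟩ := hex jm
  have huW' : u ∈ Wᶜ := huW
  set u' : ↥(Wᶜ) := ⟨u, huW'⟩ with hu'def
  have hwalk : ∀ v : ↥(Wᶜ), ∃ wk : ((G2 m p).induce Wᶜ).Walk v u', wk.length ≤ 2 := by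
    intro v
    by_cases hc : jm ∈ Z m p (v : Vtx m p).1
    · have hZv_ne : Z m p (v : Vtx m p).1 ≠ Finset.univ := by
        intro h
        apply (v : Vtx m p).2.1
        rw [eq_zero_iff hp hinj]
        intro i
        rw [← mem_Z, h]
        exact Finset.mem_univ i
      obtain ⟨jj, hjj⟩ : ∃ jj, jj ∉ Z m p (v : Vtx m p).1 := by
        by_contra h
        push_neg at h
        exact hZv_ne (Finset.eq_univ_iff_forall.mpr h)
      obtain ⟨w, hZw, hwW⟩ := hex jj
      have adj1 : (G2 m p).Adj (v : Vtx m p) w := by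
        refine adj_of_disjoint hp hinj _ _ fun i hi hiw => ?_
        rw [hZw, Finset.mem_singleton] at hiw
        exact hjj (hiw ▸ hi)
      have adj2 : (G2 m p).Adj w u := by
        refine adj_of_disjoint hp hinj _ _ fun i hi hiu => ?_
        rw [hZw, Finset.mem_singleton] at hi
        rw [hZu, Finset.mem_singleton] at hiu
        exact hjj (by rw [hi.symm.trans hiu]; exact hc)
      have hwW' : w ∈ Wᶜ := hwW
      refine ⟨SimpleGraph.Walk.cons (u := v) (v := ⟨w, hwW'⟩) (SimpleGraph.induce_adj.mpr adj1)
        (SimpleGraph.Walk.cons (v := u') (SimpleGraph.induce_adj.mpr adj2) SimpleGraph.Walk.nil), by simp⟩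
    · have adj1 : (G2 m p).Adj (v : Vtx m p) u := by
        refine adj_of_disjoint hp hinj _ _ fun i hi hiu => ?_
        rw [hZu, Finset.mem_singleton] at hiu
        exact hc (hiu ▸ hi)
      exact ⟨SimpleGraph.Walk.cons (v := u') (SimpleGraph.induce_adj.mpr adj1) SimpleGraph.Walk.nil, by simp⟩
  refine ⟨?_, ?_, ?_⟩
  · rw [SimpleGraph.connected_iff]
    refine ⟨fun a b => ?_, ⟨u'⟩⟩
    obtain ⟨wa, -⟩ := hwalk a
    obtain ⟨wb, -⟩ := hwalk b
    exact ⟨wa.append wb.reverse⟩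
  · intro v
    obtain ⟨wk, hlen⟩ := hwalk v
    exact ⟨u', hZu, le_trans (SimpleGraph.dist_le wk) hlen⟩
  · refine csSup_le' ?_
    rintro d ⟨x, y, rfl⟩
    obtain ⟨wx, hx⟩ := hwalk x
    obtain ⟨wy, hy⟩ := hwalk y
    have := SimpleGraph.dist_le (wx.append wy.reverse)
    rw [SimpleGraph.Walk.length_append, SimpleGraph.Walk.length_reverse] at this
    omega
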